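/- arXiv:2511.19763 — 8 statements merged into one kernel-verified Lean document; each statement's English description precedes it below -/
import Mathlib

section
/- Let p be a prime number. There exist integers a and b such that p = a² + a·b + b² if and only if p = 3 or p ≡ 1 (mod 3). -/
set_option maxHeartbeats 1000000

theorem prime_iff_quadratic_form (p : ℕ) (hp : p.Prime) :
    (∃ a b : ℤ, (p : ℤ) = a ^ 2 + a * b + b ^ 2) ↔ (p = 3 ∨ p % 3 = 1) := by
  haveI : Fact p.Prime := ⟨hp⟩
  constructor
  · rintro ⟨a, b, hab⟩
    by_contra hcon
    push_neg at hcon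
    obtain ⟨h3, h1⟩ := hcon
    have h0 : p % 3 ≠ 0 := by
      intro h
      exact h3 ((Nat.prime_dvd_prime_iff_eq Nat.prime_three hp).mp
        (Nat.dvd_of_mod_eq_zero h)).symm
    have h2 : p % 3 = 2 := by omega
    have hcast : ((p : ℕ) : ZMod 3) = (a : ZMod 3) ^ 2 + (a : ZMod 3) * (b : ZMod 3) + (b : ZMod 3) ^ 2 := by
      have := congrArg (fun z : ℤ => (z : ZMod 3)) hab
      push_cast at this
      exact this
    have hpz : ((p : ℕ) : ZMod 3) = 2 := by
      rw [← ZMod.natCast_mod p 3, h2]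
      rfl
    have key : ∀ x y : ZMod 3, x ^ 2 + x * y + y ^ 2 ≠ 2 := by decide
    exact key _ _ (hpz ▸ hcast).symm
  · rintro (rfl | h1)
    · exact ⟨1, 1, by norm_num⟩
    · -- p ≡ 1 mod 3
      have hp4 : p ≠ 4 := by intro h; rw [h] at hp; norm_num at hp
      have hp7 : 7 ≤ p := by
        have := hp.two_le
        omega
      -- cube root of unity
      obtain ⟨g, hg⟩ := IsCyclic.exists_generator (α := (ZMod p)ˣ)
      have hord : orderOf g = p - 1 := by
        rw [orderOf_eq_card_of_forall_mem_zpowers hg, Nat.card_eq_fintype_card, ZMod.card_units_eq_totient,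
          Nat.totient_prime hp]
      have hdvd3 : 3 ∣ p - 1 := by omega
      set k := (p - 1) / 3 with hk
      have hk3 : k * 3 = p - 1 := Nat.div_mul_cancel hdvd3
      have hkpos : 0 < k := by omega
      have hklt : k < p - 1 := by omega
      set u := g ^ k with hu
      have hu3 : u ^ 3 = 1 := by
        rw [hu, ← pow_mul, hk3, ← hord, pow_orderOf_eq_one]
      have hu1 : u ≠ 1 := by
        intro h
        have := orderOf_dvd_of_pow_eq_one (n := k) (by rw [← hu, h])
        rw [hord] at this
        exact absurd (Nat.le_of_dvd hkpos this) (by omega)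
      set c : ZMod p := (u : ZMod p) with hc
      have hc3 : c ^ 3 = 1 := by
        rw [hc, ← Units.val_pow_eq_pow_val, hu3, Units.val_one]
      have hc1 : c ≠ 1 := fun h => hu1 (Units.ext h)
      have hcroot : c ^ 2 + c + 1 = 0 := by
        have hmul : (c - 1) * (c ^ 2 + c + 1) = 0 := by linear_combination hc3
        rcases mul_eq_zero.mp hmul with h | h
        · exact absurd (sub_eq_zero.mp h) hc1
        · exact h
      -- Thue's lemma via pigeonhole
      set n := Nat.sqrt p with hn
      have hnp : n * n < p := by
        rcases lt_or_eq_of_le (Nat.sqrt_le' p) with h | h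
        · nlinarith [h]
        · exfalso
          have hdvd : n ∣ p := ⟨n, by nlinarith [h]⟩
          rcases (Nat.Prime.eq_one_or_self_of_dvd hp n hdvd) with h' | h' <;>
            rw [hn] at h' <;> nlinarith [h, h', hp7]
      have hcard : (Finset.univ : Finset (ZMod p)).card <
          ((Finset.range (n + 1)) ×ˢ (Finset.range (n + 1))).card := by
        rw [Finset.card_product, Finset.card_range, Finset.card_univ, ZMod.card]
        have := Nat.lt_succ_sqrt p
        simpa [hn, Nat.succ_eq_add_one] using this
      obtain ⟨⟨x1, y1⟩, hm1, ⟨x2, y2⟩, hm2, hne, heq⟩ :=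
        Finset.exists_ne_map_eq_of_card_lt_of_maps_to hcard
          (f := fun q : ℕ × ℕ => (q.1 : ZMod p) - c * (q.2 : ZMod p))
          (fun x _ => Finset.mem_univ _)
      simp only [Finset.mem_product, Finset.mem_range] at hm1 hm2
      set a : ℤ := (x1 : ℤ) - (x2 : ℤ) with ha
      set b : ℤ := (y1 : ℤ) - (y2 : ℤ) with hb
      have hab0 : a ≠ 0 ∨ b ≠ 0 := by
        by_contra h
        push_neg at h
        apply hne
        have h1' := h.1; have h2' := h.2
        rw [ha, sub_eq_zero] at h1'
        rw [hb, sub_eq_zero] at h2'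
        have : x1 = x2 := by exact_mod_cast h1'
        have : y1 = y2 := by exact_mod_cast h2'
        simp_all
      have haZ : ((a : ℤ) : ZMod p) = c * ((b : ℤ) : ZMod p) := by
        push_cast [ha, hb]
        linear_combination heq
      set N : ℤ := a ^ 2 + a * b + b ^ 2 with hN
      have hNdvd : (p : ℤ) ∣ N := by
        rw [← ZMod.intCast_zmod_eq_zero_iff_dvd]
        push_cast [hN]
        rw [haZ]
        linear_combination ((b : ℤ) : ZMod p) ^ 2 * hcroot
      clear haZ heq hcroot hc3 hc1 hu3 hu1 hg hcard
      have hba1 : -(n : ℤ) ≤ a := by rw [ha]; omega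
      have hba2 : a ≤ (n : ℤ) := by rw [ha]; omega
      have hbb1 : -(n : ℤ) ≤ b := by rw [hb]; omega
      have hbb2 : b ≤ (n : ℤ) := by rw [hb]; omega
      have hNpos : 0 < N := by
        rcases hab0 with h | h
        · have h1 : 1 ≤ a ^ 2 := by
            rcases lt_or_gt_of_ne h with h' | h' <;> nlinarith
          nlinarith [sq_nonneg (a + 2 * b)]
        · have h1 : 1 ≤ b ^ 2 := by
            rcases lt_or_gt_of_ne h with h' | h' <;> nlinarith
          nlinarith [sq_nonneg (2 * a + b)]
      have hnpZ : (n : ℤ) * n < p := by exact_mod_cast hnp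
      have hNlt : N < 3 * p := by
        have ha2 : a ^ 2 ≤ (n : ℤ) * n := by nlinarith [hba1, hba2]
        have hb2 : b ^ 2 ≤ (n : ℤ) * n := by nlinarith [hbb1, hbb2]
        nlinarith [sq_nonneg (a - b)]
      obtain ⟨m, hm⟩ := hNdvd
      have hppos : (0 : ℤ) < p := by exact_mod_cast hp.pos
      have hm12 : m = 1 ∨ m = 2 := by
        have h1 : 0 < m := by nlinarith
        have h2 : m < 3 := by nlinarith
        omega
      rcases hm12 with rfl | rfl
      · exact ⟨a, b, by linarith [hm]⟩
      · exfalso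
        -- N = 2p : parity contradiction
        have hNmod2 : ((N : ℤ) : ZMod 2) = 0 := by
          rw [hm]
          push_cast
          exact mul_eq_zero_of_right _ (by decide)
        have key2 : ∀ x y : ZMod 2, x ^ 2 + x * y + y ^ 2 = 0 → x = 0 ∧ y = 0 := by decide
        have hNc : ((a : ℤ) : ZMod 2) ^ 2 + ((a : ℤ) : ZMod 2) * ((b : ℤ) : ZMod 2) + ((b : ℤ) : ZMod 2) ^ 2 = 0 := by
          rw [← hNmod2, hN]; push_cast; ring
        obtain ⟨ha0, hb0⟩ := key2 _ _ hNc
        have hda : (2 : ℤ) ∣ a := by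
          rwa [ZMod.intCast_zmod_eq_zero_iff_dvd] at ha0
        have hdb : (2 : ℤ) ∣ b := by
          rwa [ZMod.intCast_zmod_eq_zero_iff_dvd] at hb0
        obtain ⟨a', ha'⟩ := hda
        obtain ⟨b', hb'⟩ := hdb
        have hNval : (p : ℤ) * 2 = (2 * a') ^ 2 + (2 * a') * (2 * b') + (2 * b') ^ 2 := by
          rw [← ha', ← hb', ← hN, ← hm]
        have hpd : (2 : ℤ) ∣ (p : ℤ) := ⟨a' ^ 2 + a' * b' + b' ^ 2, by nlinarith [hNval]⟩
        have : (2 : ℕ) ∣ p := by exact_mod_cast hpd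
        have := (Nat.prime_dvd_prime_iff_eq Nat.prime_two hp).mp this
        omega
end

section
/- Let p be a prime number with p ≡ 1 (mod 3). Then there exist positive integers a and b such that p = a² + a·b + b². -/
set_option maxHeartbeats 1600000 in
theorem exists_pos_quadratic_form (p : ℕ) (hp : p.Prime) (h : p % 3 = 1) :
    ∃ a b : ℕ, 0 < a ∧ 0 < b ∧ p = a ^ 2 + a * b + b ^ 2 := by
  haveI : Fact p.Prime := ⟨hp⟩
  have hp2 : 2 ≤ p := hp.two_le
  -- find c with c^2 + c + 1 = 0 in ZMod p
  have hdvd : 3 ∣ Fintype.card (ZMod p)ˣ := by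
    rw [ZMod.card_units p]; omega
  haveI : Fact (Nat.Prime 3) := ⟨by norm_num⟩
  obtain ⟨ζ, hζ⟩ := exists_prime_orderOf_dvd_card 3 hdvd
  set c : ZMod p := (ζ : ZMod p) with hcdef
  have hζ3 : ζ ^ 3 = 1 := by rw [← hζ]; exact pow_orderOf_eq_one ζ
  have hc3 : c ^ 3 = 1 := by
    rw [hcdef, ← Units.val_pow_eq_pow_val, hζ3, Units.val_one]
  have hcne1 : c ≠ 1 := by
    intro hh
    have : ζ = 1 := Units.val_eq_one.mp hh
    rw [this, orderOf_one] at hζ; omega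
  have hce : c ^ 2 + c + 1 = 0 := by
    have h0 : (c - 1) * (c ^ 2 + c + 1) = 0 := by linear_combination hc3
    rcases mul_eq_zero.mp h0 with h1 | h2
    · exact absurd (sub_eq_zero.mp h1) hcne1
    · exact h2
  clear hc3 hcne1 hζ3 hζ hdvd
  -- Thue's lemma via pigeonhole
  obtain ⟨m, hm⟩ : ∃ m, m = Nat.sqrt p := ⟨_, rfl⟩
  have hcard : Fintype.card (ZMod p) < Fintype.card (Fin (m + 1) × Fin (m + 1)) := by
    simp only [ZMod.card, Fintype.card_prod, Fintype.card_fin]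
    rw [hm]
    have := Nat.lt_succ_sqrt p
    nlinarith [Nat.sqrt_le p]
  obtain ⟨⟨a1, b1⟩, ⟨a2, b2⟩, hne, heq⟩ :=
    Fintype.exists_ne_map_eq_of_card_lt
      (fun q : Fin (m + 1) × Fin (m + 1) => ((q.1 : ZMod p) - c * (q.2 : ZMod p))) hcard
  simp only at heq
  obtain ⟨x, hx⟩ : ∃ x : ℤ, x = (a1 : ℤ) - (a2 : ℤ) := ⟨_, rfl⟩
  obtain ⟨y, hy⟩ : ∃ y : ℤ, y = (b1 : ℤ) - (b2 : ℤ) := ⟨_, rfl⟩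
  have hxe : (x : ZMod p) = c * (y : ZMod p) := by
    rw [hx, hy]; push_cast
    linear_combination heq
  have ha1 : (a1 : ℕ) ≤ m := Nat.lt_succ_iff.mp a1.2
  have ha2 : (a2 : ℕ) ≤ m := Nat.lt_succ_iff.mp a2.2
  have hb1 : (b1 : ℕ) ≤ m := Nat.lt_succ_iff.mp b1.2
  have hb2 : (b2 : ℕ) ≤ m := Nat.lt_succ_iff.mp b2.2
  have hxb : x.natAbs ≤ m := by omega
  have hyb : y.natAbs ≤ m := by omega
  have hmp : m * m < p := by
    rcases Nat.lt_or_ge (m * m) p with h1 | h1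
    · exact h1
    · exfalso
      have hpe : p = m * m := le_antisymm h1 (by rw [hm]; exact Nat.sqrt_le p)
      have hmd : m ∣ p := ⟨m, hpe⟩
      rcases hp.eq_one_or_self_of_dvd m hmd with h' | h' <;> rw [h'] at hpe <;> nlinarith
  have hmlt : m < p := by nlinarith
  -- y ≠ 0 and x ≠ 0
  have hy0 : y ≠ 0 := by
    intro h0
    have hx0 : (x : ZMod p) = 0 := by rw [hxe, h0]; simp
    have hdx : (p : ℤ) ∣ x := by
      exact_mod_cast (ZMod.intCast_zmod_eq_zero_iff_dvd x p).mp hx0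
    have hdn : p ∣ x.natAbs := by
      have := Int.natAbs_dvd_natAbs.mpr hdx
      simpa using this
    have : x.natAbs = 0 := Nat.eq_zero_of_dvd_of_lt hdn (by omega)
    apply hne
    have h1 : (a1 : ℕ) = a2 := by omega
    have h2 : (b1 : ℕ) = b2 := by omega
    exact Prod.ext (Fin.ext h1) (Fin.ext h2)
  have hx0 : x ≠ 0 := by
    intro h0
    have hc0 : c ≠ 0 := by
      intro hh; rw [hh] at hce; simp at hce
    have h1 : c * (y : ZMod p) = 0 := by rw [← hxe, h0]; simp
    have hy0' : (y : ZMod p) = 0 := by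
      rcases mul_eq_zero.mp h1 with h1 | h1
      · exact absurd h1 hc0
      · exact h1
    have hdy : (p : ℤ) ∣ y := (ZMod.intCast_zmod_eq_zero_iff_dvd y p).mp hy0'
    have hdn : p ∣ y.natAbs := by
      have := Int.natAbs_dvd_natAbs.mpr hdy
      simpa using this
    have := Nat.eq_zero_of_dvd_of_lt hdn (by omega)
    omega
  obtain ⟨N, hN⟩ : ∃ N : ℤ, N = x ^ 2 + x * y + y ^ 2 := ⟨_, rfl⟩
  have hNdvd : (p : ℤ) ∣ N := by
    have hN0 : (N : ZMod p) = 0 := by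
      rw [hN]; push_cast
      rw [hxe]
      linear_combination ((y : ZMod p) ^ 2) * hce
    exact_mod_cast (ZMod.intCast_zmod_eq_zero_iff_dvd N p).mp hN0
  have hyabs : 1 ≤ y.natAbs := by omega
  have hylb : 1 ≤ y ^ 2 := by
    have h1 : y ^ 2 ≠ 0 := pow_ne_zero 2 hy0
    have h2 : 0 ≤ y ^ 2 := sq_nonneg y
    omega
  have hNpos : 0 < N := by
    nlinarith [sq_nonneg (2 * x + y), hN]
  have hxr : -(m : ℤ) ≤ x ∧ x ≤ m := by omega
  have hyr : -(m : ℤ) ≤ y ∧ y ≤ m := by omega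
  have hplt : (m : ℤ) * m < p := by exact_mod_cast hmp
  have hNlt : N < 3 * p := by
    obtain ⟨hx1, hx2⟩ := hxr
    obtain ⟨hy1, hy2⟩ := hyr
    have hA : x ^ 2 ≤ (m:ℤ) * m := by
      nlinarith [mul_nonneg (by linarith : (0:ℤ) ≤ (m:ℤ) - x) (by linarith : (0:ℤ) ≤ (m:ℤ) + x)]
    have hB : y ^ 2 ≤ (m:ℤ) * m := by
      nlinarith [mul_nonneg (by linarith : (0:ℤ) ≤ (m:ℤ) - y) (by linarith : (0:ℤ) ≤ (m:ℤ) + y)]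
    have hC : x * y ≤ (m:ℤ) * m := by
      nlinarith [mul_nonneg (by linarith : (0:ℤ) ≤ (m:ℤ) - x) (by linarith : (0:ℤ) ≤ (m:ℤ) + y),
        mul_nonneg (by linarith : (0:ℤ) ≤ (m:ℤ) + x) (by linarith : (0:ℤ) ≤ (m:ℤ) - y)]
    rw [hN]
    linarith
  -- N = p or 2p
  obtain ⟨k, hk⟩ := hNdvd
  have hppos : (0 : ℤ) < p := by exact_mod_cast hp.pos
  have hk12 : k = 1 ∨ k = 2 := by
    have hk0 : 0 < k := by
      by_contra h'
      push_neg at h'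
      have : (p : ℤ) * k ≤ 0 := mul_nonpos_of_nonneg_of_nonpos (le_of_lt hppos) h'
      linarith [hk ▸ hNpos]
    have hk3 : k < 3 := by
      by_contra h'
      push_neg at h'
      have : (p : ℤ) * 3 ≤ (p : ℤ) * k := mul_le_mul_of_nonneg_left h' (le_of_lt hppos)
      have := hk ▸ hNlt
      linarith
    omega
  have hNp : N = p := by
    rcases hk12 with rfl | rfl
    · simpa using hk
    · exfalso
      have hpodd : ¬ (2 ∣ p) := by
        intro hh; rcases (hp.eq_one_or_self_of_dvd 2 hh) with h' | h' <;> omega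
      rcases Int.even_or_odd x with ⟨u, hu⟩ | ⟨u, hu⟩ <;>
        rcases Int.even_or_odd y with ⟨v, hv⟩ | ⟨v, hv⟩
      · obtain ⟨t, ht⟩ : ∃ t : ℤ, t = u ^ 2 + u * v + v ^ 2 := ⟨_, rfl⟩
        have h4 : N = 4 * t := by rw [hN, hu, hv, ht]; ring
        have h2p : (2 : ℤ) ∣ p := by omega
        exact hpodd (by exact_mod_cast h2p)
      · obtain ⟨t, ht⟩ : ∃ t : ℤ, t = 2*u^2 + 2*u*v + u + 2*v^2 + 2*v := ⟨_, rfl⟩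
        have h4 : N = 2 * t + 1 := by rw [hN, hu, hv, ht]; ring
        omega
      · obtain ⟨t, ht⟩ : ∃ t : ℤ, t = 2*u^2 + 2*u*v + 2*u + v + 2*v^2 := ⟨_, rfl⟩
        have h4 : N = 2 * t + 1 := by rw [hN, hu, hv, ht]; ring
        omega
      · obtain ⟨t, ht⟩ : ∃ t : ℤ, t = 2*u^2 + 2*u*v + 2*v^2 + 3*u + 3*v + 1 := ⟨_, rfl⟩
        have h4 : N = 2 * t + 1 := by rw [hN, hu, hv, ht]; ring
        omega
  -- convert to naturals
  obtain ⟨u, hu⟩ : ∃ u, u = x.natAbs := ⟨_, rfl⟩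
  obtain ⟨v, hv⟩ : ∃ v, v = y.natAbs := ⟨_, rfl⟩
  have hupos : 0 < u := by omega
  have hvpos : 0 < v := by omega
  have hxu : x = u ∨ x = -(u : ℤ) := by rw [hu]; exact Int.natAbs_eq x
  have hyv : y = v ∨ y = -(v : ℤ) := by rw [hv]; exact Int.natAbs_eq y
  have hnotsq : ∀ w : ℕ, p ≠ w * w := by
    intro w hw
    have : w ∣ p := ⟨w, hw⟩
    rcases hp.eq_one_or_self_of_dvd w this with rfl | rfl <;> nlinarith
  have main : ∀ hpe : (p : ℤ) = (u : ℤ)^2 - u*v + v^2,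
      ∃ a b : ℕ, 0 < a ∧ 0 < b ∧ p = a ^ 2 + a * b + b ^ 2 := by
    intro hpe
    have huv : u ≠ v := by
      intro hh
      apply hnotsq u
      have : (p : ℤ) = (u : ℤ) * u := by rw [hpe, hh]; ring
      exact_mod_cast this
    rcases Nat.lt_or_ge u v with hlt | hge
    · refine ⟨v - u, u, by omega, hupos, ?_⟩
      have hcast : ((v - u : ℕ) : ℤ) = (v : ℤ) - u := by omega
      have : (p : ℤ) = ((v - u : ℕ) : ℤ)^2 + ((v - u : ℕ) : ℤ) * u + (u : ℤ)^2 := by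
        rw [hcast, hpe]; ring
      exact_mod_cast this
    · refine ⟨u - v, v, by omega, hvpos, ?_⟩
      have hcast : ((u - v : ℕ) : ℤ) = (u : ℤ) - v := by omega
      have : (p : ℤ) = ((u - v : ℕ) : ℤ)^2 + ((u - v : ℕ) : ℤ) * v + (v : ℤ)^2 := by
        rw [hcast, hpe]; ring
      exact_mod_cast this
  rcases hxu with h1 | h1 <;> rcases hyv with h2 | h2
  · refine ⟨u, v, hupos, hvpos, ?_⟩
    have : (p : ℤ) = (u : ℤ)^2 + u*v + v^2 := by rw [← hNp, hN, h1, h2]; try ring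
    exact_mod_cast this
  · exact main (by rw [← hNp, hN, h1, h2]; try ring)
  · exact main (by rw [← hNp, hN, h1, h2]; try ring)
  · refine ⟨u, v, hupos, hvpos, ?_⟩
    have : (p : ℤ) = (u : ℤ)^2 + u*v + v^2 := by rw [← hNp, hN, h1, h2]; try ring
    exact_mod_cast this
end

section
/- A prime number p satisfies p ≡ 1 (mod 3) if and only if there exist unique positive integers x and y such that p = x² + 3y² (i.e., there is exactly one pair (x, y) of positive integers with p = x² + 3y²). -/
/-- Uniqueness of the representation `p = a² + 3b²` over ℤ. -/
lemma uniq_aux (p a b c d : ℤ) (hp : Prime p)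
    (ha : 0 < a) (hb : 0 < b) (hc : 0 < c) (hd : 0 < d)
    (h1 : p = a ^ 2 + 3 * b ^ 2) (h2 : p = c ^ 2 + 3 * d ^ 2) :
    a = c ∧ b = d := by
  have hp0 : 0 < p := by nlinarith
  have hdvd : p ∣ (a * d - b * c) * (a * d + b * c) := by
    refine ⟨d ^ 2 - b ^ 2, ?_⟩
    nlinarith [h1, h2]
  rcases hp.dvd_mul.mp hdvd with h | h
  · -- p ∣ a*d - b*c ; show it's zero
    have hid : p ^ 2 = (a * c + 3 * b * d) ^ 2 + 3 * (a * d - b * c) ^ 2 := by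
      nlinarith [h1, h2]
    have habs : a * d - b * c = 0 := by
      by_contra h0
      have h1' : p ≤ |a * d - b * c| := Int.le_of_dvd (abs_pos.mpr h0) ((dvd_abs _ _).mpr h)
      nlinarith [sq_abs (a * d - b * c), sq_nonneg (a * c + 3 * b * d)]
    have hsq : p * d ^ 2 = p * b ^ 2 := by
      linear_combination d ^ 2 * h1 - b ^ 2 * h2 + (a * d + b * c) * habs
    have hd2 : d ^ 2 = b ^ 2 := mul_left_cancel₀ (ne_of_gt hp0) hsq
    have hbd : b = d := by
      have h1' : b ≤ d := by nlinarith
      have h2' : d ≤ b := by nlinarith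
      linarith
    have hac : a = c := by
      have ha2 : a ^ 2 = c ^ 2 := by nlinarith
      have h1' : a ≤ c := by nlinarith
      have h2' : c ≤ a := by nlinarith
      linarith
    exact ⟨hac, hbd⟩
  · -- p ∣ a*d + b*c : impossible
    exfalso
    have hpos : 0 < a * d + b * c := by positivity
    have h1' : p ≤ a * d + b * c := Int.le_of_dvd hpos h
    have hid : p ^ 2 = (a * c - 3 * b * d) ^ 2 + 3 * (a * d + b * c) ^ 2 := by
      nlinarith [h1, h2]
    nlinarith [sq_nonneg (a * c - 3 * b * d)]

/-- If `p` is prime with `p % 3 = 1` and `(p:ℤ) = a² + 3b²` then `a ≠ 0` and `b ≠ 0`. -/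
lemma nonzero_aux (p : ℕ) (hp : p.Prime) (h3 : p % 3 = 1) (a b : ℤ)
    (h : (p : ℤ) = a ^ 2 + 3 * b ^ 2) : a ≠ 0 ∧ b ≠ 0 := by
  have hpZ : Prime (p : ℤ) := Nat.prime_iff_prime_int.mp hp
  have hp2 : (2:ℤ) ≤ p := by exact_mod_cast hp.two_le
  constructor
  · rintro rfl
    have h3dvd : (3:ℤ) ∣ (p:ℤ) := ⟨b ^ 2, by linarith⟩
    have h3N : (3:ℕ) ∣ p := by exact_mod_cast h3dvd
    have := hp.eq_one_or_self_of_dvd 3 h3N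
    omega
  · rintro rfl
    have hdvd : (p:ℤ) ∣ a * a := ⟨1, by nlinarith⟩
    have hpa : (p:ℤ) ∣ a := (hpZ.dvd_mul.mp hdvd).elim id id
    have ha0 : a ≠ 0 := by
      rintro rfl
      simp at h
      omega
    have hle := Int.le_of_dvd (abs_pos.mpr ha0) ((dvd_abs _ _).mpr hpa)
    nlinarith [sq_abs a]

set_option maxHeartbeats 1600000 in
/-- Existence: a prime `p ≡ 1 [MOD 3]` is `a² + 3b²` with `a b ≠ 0`, over ℤ. -/
lemma exists_aux (p : ℕ) (hp : p.Prime) (h3 : p % 3 = 1) :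
    ∃ a b : ℤ, a ≠ 0 ∧ b ≠ 0 ∧ (p : ℤ) = a ^ 2 + 3 * b ^ 2 := by
  haveI : Fact p.Prime := ⟨hp⟩
  have hp2 : 2 ≤ p := hp.two_le
  have hp7 : 7 ≤ p := by
    by_contra hlt
    push_neg at hlt
    interval_cases p <;> first | omega | (norm_num at hp)
  -- Step 1: find ζ : ZMod p with ζ² = -3
  have h3div : (3:ℕ) ∣ Fintype.card (ZMod p)ˣ := by
    rw [ZMod.card_units_eq_totient, Nat.totient_prime hp]
    omega
  haveI : Fact (Nat.Prime 3) := ⟨by norm_num⟩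
  obtain ⟨u, hu⟩ := exists_prime_orderOf_dvd_card 3 h3div
  set ω : ZMod p := (u : ZMod p) with hωdef
  have hω3 : ω ^ 3 = 1 := by
    have h := pow_orderOf_eq_one u
    rw [hu] at h
    have h2 := congrArg (Units.val) h
    simpa using h2
  have hω1 : ω ≠ 1 := by
    intro h
    have : u = 1 := Units.ext h
    rw [this] at hu
    simp at hu
  have hkey : ω ^ 2 + ω + 1 = 0 := by
    have hmul : (ω - 1) * (ω ^ 2 + ω + 1) = 0 := by linear_combination hω3
    rcases mul_eq_zero.mp hmul with h | h
    · exact absurd (sub_eq_zero.mp h) hω1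
    · exact h
  set ζ : ZMod p := 2 * ω + 1 with hζdef
  have hζ : ζ ^ 2 = -3 := by linear_combination 4 * hkey
  -- Step 2: Thue's lemma via pigeonhole
  set n : ℕ := Nat.sqrt p with hn
  have hle : n ^ 2 ≤ p := Nat.sqrt_le' p
  have hn2 : n ^ 2 < p := by
    rcases Nat.eq_or_lt_of_le hle with heq | hlt
    · exfalso
      have hdvd : n ∣ p := ⟨n, by nlinarith⟩
      rcases hp.eq_one_or_self_of_dvd n hdvd with h1 | h1
      · rw [h1] at heq; omega
      · rw [h1] at heq; nlinarith
    · exact hlt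
  have hn2' : p < (n + 1) ^ 2 := by
    have := Nat.lt_succ_sqrt p
    nlinarith [this]
  have hcard : (Finset.univ : Finset (ZMod p)).card
      < ((Finset.range (n+1)) ×ˢ (Finset.range (n+1))).card := by
    rw [Finset.card_product, Finset.card_range, Finset.card_univ, ZMod.card]
    nlinarith
  obtain ⟨⟨a1, b1⟩, hs1, ⟨a2, b2⟩, hs2, hne, heq⟩ :=
    Finset.exists_ne_map_eq_of_card_lt_of_maps_to
      (f := fun ab : ℕ × ℕ => ((ab.1 : ZMod p) - ζ * ab.2))
      hcard (fun a _ => Finset.mem_univ _)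
  simp only [Finset.mem_product, Finset.mem_range] at hs1 hs2
  set x : ℤ := (a1 : ℤ) - a2 with hxdef
  set y : ℤ := (b1 : ℤ) - b2 with hydef
  have hxy : ((x : ℤ) : ZMod p) = ζ * ((y : ℤ) : ZMod p) := by
    rw [hxdef, hydef]
    push_cast
    linear_combination heq
  have hne' : ¬(x = 0 ∧ y = 0) := by
    rintro ⟨hx0, hy0⟩
    apply hne
    have ha : a1 = a2 := by omega
    have hb : b1 = b2 := by omega
    simp [ha, hb]
  have hdvd : (p : ℤ) ∣ x ^ 2 + 3 * y ^ 2 := by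
    have hzero : ((x ^ 2 + 3 * y ^ 2 : ℤ) : ZMod p) = 0 := by
      push_cast
      linear_combination (((x:ℤ) : ZMod p) + ζ * ((y:ℤ) : ZMod p)) * hxy + ((y:ℤ) : ZMod p) ^ 2 * hζ
    exact (ZMod.intCast_zmod_eq_zero_iff_dvd _ p).mp hzero
  have hxb : x ^ 2 ≤ (n:ℤ) ^ 2 := by
    have hax : |x| ≤ (n:ℤ) := by rw [abs_le]; omega
    nlinarith [sq_abs x, abs_nonneg x]
  have hyb : y ^ 2 ≤ (n:ℤ) ^ 2 := by
    have hay : |y| ≤ (n:ℤ) := by rw [abs_le]; omega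
    nlinarith [sq_abs y, abs_nonneg y]
  clear hxy heq hζ hζdef hkey hω3 hω1
  clear ζ
  clear hωdef
  clear ω
  clear hu u hcard h3div hn hxdef hydef
  clear_value x y n
  have hkpos : 0 < x ^ 2 + 3 * y ^ 2 := by
    rcases (not_and_or.mp hne') with h | h
    · have := pow_two_pos_of_ne_zero h
      linarith [sq_nonneg y]
    · have := pow_two_pos_of_ne_zero h
      linarith [sq_nonneg x]
  have hklt : x ^ 2 + 3 * y ^ 2 < 4 * p := by
    have hnp : (n:ℤ) ^ 2 < p := by exact_mod_cast hn2
    nlinarith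
  obtain ⟨m, hm⟩ := hdvd
  have hp0 : (0:ℤ) < p := by exact_mod_cast hp.pos
  have hm1 : 1 ≤ m := by nlinarith
  have hm4 : m < 4 := by nlinarith
  interval_cases m
  · -- x² + 3y² = p
    obtain ⟨ha0, hb0⟩ := nonzero_aux p hp h3 x y (by linarith)
    exact ⟨x, y, ha0, hb0, by linarith⟩
  · -- x² + 3y² = 2p : impossible mod 4
    exfalso
    have hodd : p % 2 = 1 := by
      rcases hp.eq_two_or_odd with h | h
      · omega
      · exact h
    have hcast : ((x : ℤ) : ZMod 4) ^ 2 + 3 * ((y : ℤ) : ZMod 4) ^ 2 = 2 := by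
      have h2p : ((2 * p : ℕ) : ZMod 4) = ((2 : ℕ) : ZMod 4) := by
        rw [ZMod.natCast_eq_natCast_iff]
        show 2 * p % 4 = 2 % 4
        omega
      have hc : ((x ^ 2 + 3 * y ^ 2 : ℤ) : ZMod 4) = ((2 * p : ℕ) : ZMod 4) := by
        rw [hm]; push_cast; ring
      rw [h2p] at hc
      push_cast at hc ⊢
      linear_combination hc
    have hdec : ∀ u v : ZMod 4, u ^ 2 + 3 * v ^ 2 ≠ 2 := by decide
    exact hdec _ _ hcast
  · -- x² + 3y² = 3p : then 3 ∣ x, divide out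
    have h3x : (3:ℤ) ∣ x := by
      have h3p : Prime (3:ℤ) := Int.prime_three
      have hdx : (3:ℤ) ∣ x * x := ⟨p - y ^ 2, by nlinarith⟩
      exact (h3p.dvd_mul.mp hdx).elim id id
    obtain ⟨w, hw⟩ := h3x
    have h9 : (3:ℤ) * p = 3 * (y ^ 2 + 3 * w ^ 2) := by
      linear_combination (-1) * hm + (x + 3 * w) * hw
    have hrep : (p:ℤ) = y ^ 2 + 3 * w ^ 2 := by
      exact mul_left_cancel₀ (by norm_num) h9
    obtain ⟨ha0, hb0⟩ := nonzero_aux p hp h3 y w hrep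
    exact ⟨y, w, ha0, hb0, hrep⟩

theorem prime_one_mod_three_iff_unique_rep (p : ℕ) (hp : p.Prime) :
    p % 3 = 1 ↔
      ∃! xy : ℕ × ℕ, 0 < xy.1 ∧ 0 < xy.2 ∧ p = xy.1 ^ 2 + 3 * xy.2 ^ 2 := by
  constructor
  · intro h3
    obtain ⟨a, b, ha0, hb0, hrep⟩ := exists_aux p hp h3
    have hrepZ : (p : ℤ) = (a.natAbs : ℤ) ^ 2 + 3 * (b.natAbs : ℤ) ^ 2 := by
      rw [Int.natCast_natAbs, Int.natCast_natAbs, sq_abs, sq_abs]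
      exact hrep
    have hrepN : p = a.natAbs ^ 2 + 3 * b.natAbs ^ 2 := by exact_mod_cast hrepZ
    have hpZ : Prime (p : ℤ) := Nat.prime_iff_prime_int.mp hp
    refine ⟨(a.natAbs, b.natAbs),
      ⟨Int.natAbs_pos.mpr ha0, Int.natAbs_pos.mpr hb0, hrepN⟩, ?_⟩
    rintro ⟨c, d⟩ ⟨hc, hd, hcd⟩
    have h1 : (p:ℤ) = (c:ℤ) ^ 2 + 3 * (d:ℤ) ^ 2 := by exact_mod_cast hcd
    obtain ⟨hac, hbd⟩ := uniq_aux (p:ℤ) (c:ℤ) (d:ℤ) (a.natAbs:ℤ) (b.natAbs:ℤ) hpZ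
      (by exact_mod_cast hc) (by exact_mod_cast hd)
      (by exact_mod_cast Int.natAbs_pos.mpr ha0) (by exact_mod_cast Int.natAbs_pos.mpr hb0)
      h1 hrepZ
    have hc' : c = a.natAbs := by exact_mod_cast hac
    have hd' : d = b.natAbs := by exact_mod_cast hbd
    simp [hc', hd']
  · rintro ⟨⟨x, y⟩, ⟨hx, hy, hrep⟩, -⟩
    simp only at hx hy hrep
    have hx2 : p % 3 = x ^ 2 % 3 := by omega
    have hmod : x ^ 2 % 3 = (x % 3) ^ 2 % 3 := by rw [Nat.pow_mod]
    rcases (show x % 3 = 0 ∨ x % 3 = 1 ∨ x % 3 = 2 by omega) with h | h | h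
    · exfalso
      obtain ⟨k, hk⟩ : 3 ∣ x := by omega
      have hk1 : 1 ≤ k := by omega
      have hrep' : p = 3 * (3 * k ^ 2 + y ^ 2) := by rw [hrep, hk]; ring
      have h3p : (3:ℕ) ∣ p := ⟨3 * k ^ 2 + y ^ 2, hrep'⟩
      have h31 := hp.eq_one_or_self_of_dvd 3 h3p
      have hp3 : p = 3 := by omega
      have hy1 : 1 ≤ y ^ 2 := Nat.one_le_pow _ _ hy
      have hk2 : 1 ≤ k ^ 2 := Nat.one_le_pow _ _ hk1
      have : p = 9 * k ^ 2 + 3 * y ^ 2 := by rw [hrep, hk]; ring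
      nlinarith
    · rw [h] at hmod; omega
    · rw [h] at hmod; omega
end

section
/- Let p be a prime number with p ≡ 1 (mod 3). Then there exist positive integers x and y such that p = x² + 3y². -/
lemma int_eq_zero_of_small {p : ℕ} (hp : 1 < p) {Z : ℤ} (hlt : |Z| < p)
    (hz : (Z : ZMod p) = 0) : Z = 0 := by
  have hdvd : (p : ℤ) ∣ Z := (ZMod.intCast_zmod_eq_zero_iff_dvd Z p).mp hz
  exact Int.eq_zero_of_abs_lt_dvd hdvd hlt

set_option maxHeartbeats 1000000 in
theorem exists_rep_x_sq_add_three_y_sq (p : ℕ) (hp : p.Prime) (h : p % 3 = 1) :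
    ∃ x y : ℕ, 0 < x ∧ 0 < y ∧ p = x ^ 2 + 3 * y ^ 2 := by
  haveI : Fact p.Prime := ⟨hp⟩
  have hp2 : 2 ≤ p := hp.two_le
  have hp3 : p ≠ 3 := by omega
  -- existence of a square root of -3 mod p
  have h3dvd : 3 ∣ Fintype.card (ZMod p)ˣ := by
    rw [ZMod.card_units_eq_totient, Nat.totient_prime hp]
    omega
  obtain ⟨g, hg⟩ := exists_prime_orderOf_dvd_card 3 h3dvd
  set ω : ZMod p := ↑g with hωdef
  have hω3 : ω ^ 3 = 1 := by
    have := pow_orderOf_eq_one g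
    rw [hg] at this
    have : ((g ^ 3 : (ZMod p)ˣ) : ZMod p) = ((1 : (ZMod p)ˣ) : ZMod p) := by rw [this]
    simpa using this
  have hω1 : ω ≠ 1 := by
    intro hω
    have : g = 1 := Units.ext (by simpa [hωdef] using hω)
    rw [this] at hg
    simp at hg
  have hquad : ω ^ 2 + ω + 1 = 0 := by
    have hfac : (ω - 1) * (ω ^ 2 + ω + 1) = 0 := by
      have : ω ^ 3 - 1 = 0 := by rw [hω3]; ring
      linear_combination this
    rcases mul_eq_zero.mp hfac with h1 | h2
    · exact absurd (sub_eq_zero.mp h1) hω1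
    · exact h2
  set k : ZMod p := 2 * ω + 1 with hkdef
  have hk : k ^ 2 = -3 := by
    have : k ^ 2 = 4 * (ω ^ 2 + ω + 1) - 3 := by rw [hkdef]; ring
    rw [this, hquad]; ring
  have h3ne : (3 : ZMod p) ≠ 0 := by
    intro h3
    have hdv : (p : ℕ) ∣ 3 := by
      have := (ZMod.natCast_eq_zero_iff 3 p).mp (by exact_mod_cast h3)
      exact this
    exact hp3 ((Nat.prime_dvd_prime_iff_eq hp Nat.prime_three).mp hdv)
  have hkne : k ≠ 0 := by
    intro hk0
    rw [hk0] at hk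
    have : (3 : ZMod p) = 0 := by linear_combination hk
    exact h3ne this
  -- Thue's lemma setup
  set n : ℕ := Nat.sqrt p with hndef
  have hnp : n * n < p := by
    have hle : n * n ≤ p := by rw [hndef, ← pow_two]; exact Nat.sqrt_le' p
    rcases hle.lt_or_eq with hlt | heq
    · exact hlt
    · exfalso
      have hdvd : n ∣ p := ⟨n, heq.symm⟩
      rcases (Nat.Prime.eq_one_or_self_of_dvd hp n hdvd) with h1 | h2
      · rw [h1] at heq; omega
      · rw [h2] at heq; nlinarith
  have hcardlt : Fintype.card (ZMod p) < Fintype.card (Fin (n + 1) × Fin (n + 1)) := by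
    rw [ZMod.card p]
    simp only [Fintype.card_prod, Fintype.card_fin]
    have := Nat.lt_succ_sqrt' p
    nlinarith [Nat.lt_succ_sqrt' p]
  obtain ⟨a, b, hab, hfab⟩ := Fintype.exists_ne_map_eq_of_card_lt
    (fun q : Fin (n + 1) × Fin (n + 1) => (q.1.val : ZMod p) + k * (q.2.val : ZMod p)) hcardlt
  set X : ℤ := (a.1.val : ℤ) - (b.1.val : ℤ) with hXdef
  set Y : ℤ := (b.2.val : ℤ) - (a.2.val : ℤ) with hYdef
  have hXY : (X : ZMod p) = k * (Y : ZMod p) := by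
    push_cast [hXdef, hYdef]
    linear_combination hfab
  have hXb : |X| ≤ n := by
    have h1 : a.1.val ≤ n := Nat.lt_succ_iff.mp a.1.isLt
    have h2 : b.1.val ≤ n := Nat.lt_succ_iff.mp b.1.isLt
    rw [abs_le]; constructor <;> [skip; skip] <;> simp [hXdef] <;> omega
  have hYb : |Y| ≤ n := by
    have h1 : a.2.val ≤ n := Nat.lt_succ_iff.mp a.2.isLt
    have h2 : b.2.val ≤ n := Nat.lt_succ_iff.mp b.2.isLt
    rw [abs_le]; constructor <;> [skip; skip] <;> simp [hYdef] <;> omega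
  have hnltp : (n : ℤ) < p := by exact_mod_cast (by nlinarith : n < p)
  have hXlt : |X| < p := lt_of_le_of_lt hXb hnltp
  have hYlt : |Y| < p := lt_of_le_of_lt hYb hnltp
  have hne00 : X ≠ 0 ∨ Y ≠ 0 := by
    by_contra hc
    push_neg at hc
    apply hab
    have hX0 := hc.1
    have hY0 := hc.2
    have e1 : a.1 = b.1 := by
      apply Fin.ext
      have : (a.1.val : ℤ) = b.1.val := by omega
      exact_mod_cast this
    have e2 : a.2 = b.2 := by
      apply Fin.ext
      have : (a.2.val : ℤ) = b.2.val := by omega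
      exact_mod_cast this
    exact Prod.ext e1 e2
  have hYne : Y ≠ 0 := by
    intro hY0
    rw [hY0] at hXY
    simp at hXY
    have hX0 : X = 0 := int_eq_zero_of_small (by omega) hXlt hXY
    rcases hne00 with hX | hY
    · exact hX hX0
    · exact hY hY0
  have hXne : X ≠ 0 := by
    intro hX0
    rw [hX0] at hXY
    push_cast at hXY
    have : (Y : ZMod p) = 0 := by
      rcases mul_eq_zero.mp hXY.symm with hk0 | hY0
      · exact absurd hk0 hkne
      · exact hY0
    exact hYne (int_eq_zero_of_small (by omega) hYlt this)
  -- p divides X^2 + 3Y^2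
  have hdvdM : (p : ℤ) ∣ X ^ 2 + 3 * Y ^ 2 := by
    rw [← ZMod.intCast_zmod_eq_zero_iff_dvd]
    push_cast
    rw [hXY]
    linear_combination ((Y : ℤ) : ZMod p) ^ 2 * hk
  have hMpos : 0 < X ^ 2 + 3 * Y ^ 2 := by positivity
  have hMlt : X ^ 2 + 3 * Y ^ 2 < 4 * p := by
    have hX2 : X ^ 2 ≤ (n : ℤ) ^ 2 := by
      have := sq_abs X
      nlinarith [abs_nonneg X, hXb]
    have hY2 : Y ^ 2 ≤ (n : ℤ) ^ 2 := by
      have := sq_abs Y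
      nlinarith [abs_nonneg Y, hYb]
    have : (n : ℤ) * n < p := by exact_mod_cast hnp
    nlinarith
  obtain ⟨m, hm⟩ := hdvdM
  have hppos : (0 : ℤ) < p := by exact_mod_cast hp.pos
  have hmpos : 0 < m := by nlinarith
  have hmlt : m < 4 := by nlinarith
  have hp3' : (p : ZMod 3) = 1 := by
    rw [← ZMod.natCast_mod p 3, h]; rfl
  interval_cases m
  · -- m = 1 : p = X^2 + 3Y^2
    refine ⟨X.natAbs, Y.natAbs, Int.natAbs_pos.mpr hXne, Int.natAbs_pos.mpr hYne, ?_⟩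
    have : (p : ℤ) = (X.natAbs : ℤ) ^ 2 + 3 * (Y.natAbs : ℤ) ^ 2 := by
      rw [Int.natAbs_sq X, Int.natAbs_sq Y]
      omega
    exact_mod_cast this
  · -- m = 2 : impossible mod 3
    exfalso
    have hc : ((X : ZMod 3)) ^ 2 = 2 := by
      have : ((X ^ 2 + 3 * Y ^ 2 : ℤ) : ZMod 3) = (((p : ℤ) * 2 : ℤ) : ZMod 3) := by
        rw [hm]
      push_cast at this
      rw [hp3'] at this
      have h30 : (3 : ZMod 3) = 0 := by decide
      linear_combination this - (Y : ZMod 3) ^ 2 * h30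
    have : ∀ z : ZMod 3, z ^ 2 ≠ 2 := by decide
    exact this _ hc
  · -- m = 3 : then 3 ∣ X, p = Y^2 + 3*(X/3)^2
    have h3X : (3 : ℤ) ∣ X := by
      have h3sq : (3 : ℤ) ∣ X ^ 2 := ⟨(p : ℤ) - Y ^ 2, by linarith⟩
      exact Int.prime_three.dvd_of_dvd_pow h3sq
    obtain ⟨Z, hZ⟩ := h3X
    have hZne : Z ≠ 0 := by
      intro hz; apply hXne; rw [hZ, hz, mul_zero]
    have hrep : (p : ℤ) = Y ^ 2 + 3 * Z ^ 2 := by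
      rw [hZ] at hm; nlinarith
    refine ⟨Y.natAbs, Z.natAbs, Int.natAbs_pos.mpr hYne, Int.natAbs_pos.mpr hZne, ?_⟩
    have : (p : ℤ) = (Y.natAbs : ℤ) ^ 2 + 3 * (Z.natAbs : ℤ) ^ 2 := by
      rw [Int.natAbs_sq Y, Int.natAbs_sq Z]
      omega
    exact_mod_cast this
end

section
/- Let p be a prime number. If x₁, y₁, x₂, y₂ are positive integers with p = x₁² + 3y₁² and p = x₂² + 3y₂², then x₁ = x₂ and y₁ = y₂. -/
theorem unique_rep_x_sq_add_three_y_sq (p : ℕ) (hp : p.Prime)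
    (x₁ y₁ x₂ y₂ : ℕ) (hx₁ : 0 < x₁) (hy₁ : 0 < y₁) (hx₂ : 0 < x₂) (hy₂ : 0 < y₂)
    (h₁ : p = x₁ ^ 2 + 3 * y₁ ^ 2) (h₂ : p = x₂ ^ 2 + 3 * y₂ ^ 2) :
    x₁ = x₂ ∧ y₁ = y₂ := by
  have ha : (0:ℤ) < x₁ := by exact_mod_cast hx₁
  have hb : (0:ℤ) < y₁ := by exact_mod_cast hy₁
  have hc : (0:ℤ) < x₂ := by exact_mod_cast hx₂
  have hd : (0:ℤ) < y₂ := by exact_mod_cast hy₂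
  have hP1 : (p : ℤ) = (x₁:ℤ) ^ 2 + 3 * (y₁:ℤ) ^ 2 := by exact_mod_cast h₁
  have hP2 : (p : ℤ) = (x₂:ℤ) ^ 2 + 3 * (y₂:ℤ) ^ 2 := by exact_mod_cast h₂
  have hpz : 0 < (p : ℤ) := by exact_mod_cast hp.pos
  have hprime : Prime (p : ℤ) := by rw [Int.prime_iff_natAbs_prime]; simpa using hp
  have hdvd : (p : ℤ) ∣ ((x₁:ℤ) * y₂ - x₂ * y₁) * ((x₁:ℤ) * y₂ + x₂ * y₁) := by
    refine ⟨(y₂:ℤ) ^ 2 - (y₁:ℤ) ^ 2, ?_⟩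
    linear_combination (y₁:ℤ)^2 * hP2 - (y₂:ℤ)^2 * hP1
  have key : (x₁:ℤ) * y₂ - x₂ * y₁ = 0 := by
    rcases hprime.dvd_mul.mp hdvd with h | h
    · rcases h with ⟨k, hk⟩
      have hid : (p : ℤ) ^ 2 = ((x₁:ℤ) * x₂ + 3 * y₁ * y₂) ^ 2 + 3 * ((p:ℤ) * k) ^ 2 := by
        rw [← hk]; linear_combination (p:ℤ) * hP1 + ((x₁:ℤ)^2 + 3*(y₁:ℤ)^2) * hP2
      have hle : 3 * ((p:ℤ) * k) ^ 2 ≤ (p : ℤ) ^ 2 := by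
        nlinarith [sq_nonneg ((x₁:ℤ) * x₂ + 3 * y₁ * y₂)]
      have hk0 : k = 0 := by
        rcases eq_or_ne k 0 with h0 | h0
        · exact h0
        · exfalso
          have h1 : (1:ℤ) ≤ |k| := Int.one_le_abs h0
          have h2 : (1:ℤ) ≤ k ^ 2 := by nlinarith [sq_abs k]
          nlinarith [mul_pos hpz hpz]
      rw [hk, hk0, mul_zero]
    · exfalso
      have hid : (p : ℤ) ^ 2 = ((x₁:ℤ) * x₂ - 3 * y₁ * y₂) ^ 2 + 3 * ((x₁:ℤ) * y₂ + x₂ * y₁) ^ 2 := by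
        linear_combination (p:ℤ) * hP1 + ((x₁:ℤ)^2 + 3*(y₁:ℤ)^2) * hP2
      have hpos : 0 < (x₁:ℤ) * y₂ + x₂ * y₁ := by positivity
      have hge : (p : ℤ) ≤ (x₁:ℤ) * y₂ + x₂ * y₁ := Int.le_of_dvd hpos h
      nlinarith [sq_nonneg ((x₁:ℤ) * x₂ - 3 * y₁ * y₂)]
  have hadcb : (x₁:ℤ) * y₂ = x₂ * y₁ := by linarith
  have hsq : (x₁:ℤ)^2 * y₂^2 = (x₂:ℤ)^2 * y₁^2 := by
    linear_combination ((x₁:ℤ) * y₂ + x₂ * y₁) * hadcb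
  have h2 : (p : ℤ) * ((y₂:ℤ)^2 - (y₁:ℤ)^2) = 0 := by
    linear_combination (y₂:ℤ)^2 * hP1 - (y₁:ℤ)^2 * hP2 + hsq
  have hbsq : (y₁:ℤ)^2 = (y₂:ℤ)^2 := by
    rcases mul_eq_zero.mp h2 with h | h
    · exact absurd h (by positivity)
    · linarith
  have hbsqn : y₁ ^ 2 = y₂ ^ 2 := by exact_mod_cast hbsq
  have hbd : y₁ = y₂ := Nat.pow_left_injective (by norm_num) hbsqn
  have hasq : (x₁:ℤ) ^ 2 = (x₂:ℤ) ^ 2 := by linarith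
  have hasqn : x₁ ^ 2 = x₂ ^ 2 := by exact_mod_cast hasq
  exact ⟨Nat.pow_left_injective (by norm_num) hasqn, hbd⟩
end

section
/- Let p be a prime number with p > 3 and p ≡ 1 (mod 3). Then there exists exactly one triple (x, y, z) of positive integers satisfying 3x² + y·z = p and y = z. -/
lemma not_square_of_prime {p : ℕ} (hp : p.Prime) (hp3 : 3 < p) (n : ℕ) : n * n ≠ p := by
  intro h
  rcases (Nat.Prime.eq_one_or_self_of_dvd hp n ⟨n, h.symm⟩) with h1 | h1 <;> subst h1 <;> nlinarith

lemma neg_three_is_square {p : ℕ} (hp : p.Prime) (hp3 : 3 < p) (h : p % 3 = 1) :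
    ∃ c : ZMod p, c ^ 2 = -3 := by
  haveI : Fact p.Prime := ⟨hp⟩
  have hcard : Fintype.card (ZMod p)ˣ = p - 1 := ZMod.card_units_eq_totient p ▸ (Nat.totient_prime hp)
  have hdvd : 3 ∣ Fintype.card (ZMod p)ˣ := by rw [hcard]; omega
  obtain ⟨u, hu⟩ := exists_prime_orderOf_dvd_card 3 hdvd
  have hω3 : (u : ZMod p) ^ 3 = 1 := by
    have h1 := pow_orderOf_eq_one u
    rw [hu] at h1
    have h2 : ((u^3 : (ZMod p)ˣ) : ZMod p) = 1 := by rw [h1]; rfl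
    simpa using h2
  have hω1 : (u : ZMod p) ≠ 1 := by
    intro hh
    have : (u : (ZMod p)ˣ) = 1 := Units.ext hh
    rw [this] at hu
    simp at hu
  set ω : ZMod p := (u : ZMod p)
  have key : ω ^ 2 + ω + 1 = 0 := by
    have hfac : (ω - 1) * (ω ^ 2 + ω + 1) = 0 := by linear_combination hω3
    rcases mul_eq_zero.mp hfac with h1 | h1
    · exact absurd (sub_eq_zero.mp h1) hω1
    · exact h1
  exact ⟨2 * ω + 1, by linear_combination 4 * key⟩


lemma thue_lemma {p : ℕ} (hp : p.Prime) (hp1 : 1 < p) (c : ZMod p) (hc : c ≠ 0) :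
    ∃ X Y : ℤ, X ≠ 0 ∧ Y ≠ 0 ∧ X.natAbs ≤ Nat.sqrt p ∧ Y.natAbs ≤ Nat.sqrt p ∧
      (X : ZMod p) = c * (Y : ZMod p) := by
  haveI : Fact p.Prime := ⟨hp⟩
  set k := Nat.sqrt p with hk
  set s : Finset (ℕ × ℕ) := Finset.range (k+1) ×ˢ Finset.range (k+1) with hs
  have hcard : (Finset.univ : Finset (ZMod p)).card < s.card := by
    rw [hs, Finset.card_product, Finset.card_range, Finset.card_univ, ZMod.card]
    exact Nat.lt_succ_sqrt p
  obtain ⟨a, has, b, hbs, hab, hfab⟩ :=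
    Finset.exists_ne_map_eq_of_card_lt_of_maps_to hcard
      (f := fun q : ℕ × ℕ => (q.1 : ZMod p) - c * q.2) (fun x _ => Finset.mem_univ _)
  simp only [hs, Finset.mem_product, Finset.mem_range] at has hbs
  have hfab2 : (a.1 : ZMod p) - c * a.2 = (b.1 : ZMod p) - c * b.2 := hfab
  set X : ℤ := (a.1 : ℤ) - b.1 with hX
  set Y : ℤ := (a.2 : ℤ) - b.2 with hY
  have hXc : (X : ZMod p) = c * (Y : ZMod p) := by
    rw [hX, hY]
    push_cast
    linear_combination hfab2
  have hsmall : ∀ Z : ℤ, Z.natAbs ≤ k → (Z : ZMod p) = 0 → Z = 0 := by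
    intro Z hZk hZ0
    have hdvd : (p : ℤ) ∣ Z := (ZMod.intCast_zmod_eq_zero_iff_dvd Z p).mp hZ0
    have hdvd' : p ∣ Z.natAbs := Int.natCast_dvd_natCast.mp (Int.dvd_natAbs.mpr hdvd)
    have hklt : k < p := Nat.sqrt_lt_self hp1
    rcases Nat.eq_zero_or_pos Z.natAbs with h0 | h0
    · omega
    · exact absurd (Nat.le_of_dvd h0 hdvd') (by omega)
  have hbX : X.natAbs ≤ k := by omega
  have hbY : Y.natAbs ≤ k := by omega
  have hYne : Y ≠ 0 := by
    intro hY0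
    have hX0 : X = 0 := hsmall X hbX (by rw [hXc, hY0]; simp)
    exact hab (Prod.ext (by omega) (by omega))
  have hXne : X ≠ 0 := by
    intro hX0
    have : c * (Y : ZMod p) = 0 := by rw [← hXc, hX0]; simp
    rcases mul_eq_zero.mp this with h1 | h1
    · exact hc h1
    · exact hYne (hsmall Y hbY h1)
  exact ⟨X, Y, hXne, hYne, hbX, hbY, hXc⟩

lemma exists_rep {p : ℕ} (hp : p.Prime) (hp3 : 3 < p) (h : p % 3 = 1) :
    ∃ x y : ℕ, 0 < x ∧ 0 < y ∧ 3 * x ^ 2 + y ^ 2 = p := by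
  haveI : Fact p.Prime := ⟨hp⟩
  obtain ⟨c, hc2⟩ := neg_three_is_square hp hp3 h
  have h3ne : (3 : ZMod p) ≠ 0 := by
    intro h3
    have : p ∣ 3 := by exact_mod_cast (ZMod.natCast_eq_zero_iff 3 p).mp (by exact_mod_cast h3)
    have := Nat.le_of_dvd (by norm_num) this
    omega
  have hcne : c ≠ 0 := by
    intro h0
    rw [h0] at hc2
    apply h3ne
    have : (-3 : ZMod p) = 0 := by rw [← hc2]; ring
    linear_combination -this
  obtain ⟨X, Y, hXne, hYne, hbX, hbY, hXY⟩ := thue_lemma hp (by omega) c hcne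
  -- key divisibility
  have hdvd : (p : ℤ) ∣ X ^ 2 + 3 * Y ^ 2 := by
    apply (ZMod.intCast_zmod_eq_zero_iff_dvd _ p).mp
    push_cast
    rw [hXY]
    linear_combination (Y : ZMod p) ^ 2 * hc2
  obtain ⟨m, hm⟩ := hdvd
  have hsq : (Nat.sqrt p) * (Nat.sqrt p) < p := by
    have h1 : Nat.sqrt p * Nat.sqrt p ≤ p := by
      have := Nat.sqrt_le' p
      nlinarith
    have h2 := not_square_of_prime hp hp3 (Nat.sqrt p)
    omega
  have hX2 : X ^ 2 < p := by
    have : X.natAbs * X.natAbs < p := by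
      calc X.natAbs * X.natAbs ≤ Nat.sqrt p * Nat.sqrt p := Nat.mul_le_mul hbX hbX
      _ < p := hsq
    have h2 : (X.natAbs : ℤ) * X.natAbs < p := by exact_mod_cast this
    nlinarith [Int.natAbs_sq X]
  have hY2 : Y ^ 2 < p := by
    have : Y.natAbs * Y.natAbs < p := by
      calc Y.natAbs * Y.natAbs ≤ Nat.sqrt p * Nat.sqrt p := Nat.mul_le_mul hbY hbY
      _ < p := hsq
    have h2 : (Y.natAbs : ℤ) * Y.natAbs < p := by exact_mod_cast this
    nlinarith [Int.natAbs_sq Y]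
  have hXpos : 0 < X ^ 2 := by positivity
  have hYpos : 0 < Y ^ 2 := by positivity
  have hppos : (0 : ℤ) < p := by exact_mod_cast (by omega : 0 < p)
  have hm1 : 0 < m := by nlinarith
  have hm4 : m < 4 := by nlinarith
  -- final extraction given an integer rep
  have final : ∀ A B : ℤ, A ≠ 0 → B ≠ 0 → 3 * A ^ 2 + B ^ 2 = p →
      ∃ x y : ℕ, 0 < x ∧ 0 < y ∧ 3 * x ^ 2 + y ^ 2 = p := by
    intro A B hA hB hAB
    refine ⟨A.natAbs, B.natAbs, by positivity, by positivity, ?_⟩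
    have h1 : ((3 * A.natAbs ^ 2 + B.natAbs ^ 2 : ℕ) : ℤ) = (p : ℤ) := by
      push_cast
      rw [sq_abs, sq_abs]
      exact hAB
    exact_mod_cast h1
  interval_cases m
  · -- m = 1 : X² + 3Y² = p
    exact final Y X hYne hXne (by linarith)
  · -- m = 2 : contradiction mod 4
    exfalso
    have hp4 : p % 4 = 1 ∨ p % 4 = 3 := by
      have := hp.two_le
      have : p % 2 = 1 := Nat.odd_iff.mp (hp.odd_of_ne_two (by omega))
      omega
    have hc4 : ((p : ℕ) : ZMod 4) = 1 ∨ ((p : ℕ) : ZMod 4) = 3 := by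
      have hmm : ((p % 4 : ℕ) : ZMod 4) = ((p : ℕ) : ZMod 4) := ZMod.natCast_mod p 4
      rcases hp4 with h4 | h4 <;> [left; right] <;> rw [← hmm, h4] <;> norm_num
    have key : ∀ u v w : ZMod 4, w = 1 ∨ w = 3 → u ^ 2 + 3 * v ^ 2 ≠ 2 * w := by decide
    have hcast : ((X : ZMod 4)) ^ 2 + 3 * ((Y : ZMod 4)) ^ 2 = 2 * ((p : ℕ) : ZMod 4) := by
      have h1 : ((X ^ 2 + 3 * Y ^ 2 : ℤ) : ZMod 4) = (((p : ℤ) * 2 : ℤ) : ZMod 4) := by rw [hm]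
      push_cast at h1
      linear_combination h1
    exact key _ _ _ hc4 hcast
  · -- m = 3 : 3 ∣ X
    have h3X : (3 : ℤ) ∣ X := by
      have hd : (3 : ℤ) ∣ X ^ 2 := ⟨(p : ℤ) - Y ^ 2, by linarith⟩
      exact Int.Prime.dvd_pow' (by norm_num) hd
    obtain ⟨X', hX'⟩ := h3X
    have hX'ne : X' ≠ 0 := fun h0 => hXne (by rw [hX', h0, mul_zero])
    have heq : 3 * X' ^ 2 + Y ^ 2 = p := by
      have h9 : 3 * (3 * X' ^ 2 + Y ^ 2) = 3 * p := by rw [hX'] at hm; linear_combination hm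
      exact mul_left_cancel₀ (by norm_num : (3:ℤ) ≠ 0) h9
    exact final X' Y hX'ne hYne heq

lemma unique_rep {p : ℕ} (hp : p.Prime) (hp3 : 3 < p) {a b c d : ℕ}
    (ha : 0 < a) (hb : 0 < b) (hc : 0 < c) (hd : 0 < d)
    (h1 : 3 * a ^ 2 + b ^ 2 = p) (h2 : 3 * c ^ 2 + d ^ 2 = p) : a = c ∧ b = d := by
  have hpz : Prime ((p : ℤ)) := Nat.prime_iff_prime_int.mp hp
  have hA : (0:ℤ) < a := by exact_mod_cast ha
  have hB : (0:ℤ) < b := by exact_mod_cast hb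
  have hC : (0:ℤ) < c := by exact_mod_cast hc
  have hD : (0:ℤ) < d := by exact_mod_cast hd
  have h1' : 3 * (a:ℤ) ^ 2 + (b:ℤ) ^ 2 = p := by exact_mod_cast h1
  have h2' : 3 * (c:ℤ) ^ 2 + (d:ℤ) ^ 2 = p := by exact_mod_cast h2
  have hppos : (0:ℤ) < p := by positivity
  have id1 : (p : ℤ) ^ 2 = ((b:ℤ) * d + 3 * a * c) ^ 2 + 3 * ((b:ℤ) * c - a * d) ^ 2 := by
    linear_combination -(3 * (c:ℤ) ^ 2 + (d:ℤ) ^ 2) * h1' - (p:ℤ) * h2'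
  have id2 : (p : ℤ) ^ 2 = ((b:ℤ) * d - 3 * a * c) ^ 2 + 3 * ((b:ℤ) * c + a * d) ^ 2 := by
    linear_combination -(3 * (c:ℤ) ^ 2 + (d:ℤ) ^ 2) * h1' - (p:ℤ) * h2'
  have hdvd : (p : ℤ) ∣ 3 * (((b:ℤ) * c - a * d) * ((b:ℤ) * c + a * d)) := by
    refine ⟨(b:ℤ) ^ 2 - (d:ℤ) ^ 2, ?_⟩
    linear_combination (b:ℤ) ^ 2 * h2' - (d:ℤ) ^ 2 * h1'
  have hp3' : ¬ ((p : ℤ) ∣ 3) := by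
    intro hdd
    have := Int.le_of_dvd (by norm_num) hdd
    omega
  have hdvd2 : (p : ℤ) ∣ ((b:ℤ) * c - a * d) * ((b:ℤ) * c + a * d) :=
    (hpz.dvd_mul.mp hdvd).resolve_left hp3'
  have hsumpos : (0:ℤ) < (b:ℤ) * c + a * d := by positivity
  have hsumlt : (b:ℤ) * c + a * d < p := by
    nlinarith [sq_nonneg ((b:ℤ) * d - 3 * a * c)]
  have hdvd3 : (p : ℤ) ∣ ((b:ℤ) * c - a * d) := by
    refine (hpz.dvd_mul.mp hdvd2).resolve_right ?_
    intro hdd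
    have := Int.le_of_dvd hsumpos hdd
    omega
  have hzero : (b:ℤ) * c - a * d = 0 := by
    apply Int.eq_zero_of_abs_lt_dvd hdvd3
    have h2s : ((b:ℤ) * c - a * d) ^ 2 < (p:ℤ) ^ 2 := by
      nlinarith [sq_nonneg ((b:ℤ) * d + 3 * a * c)]
    exact abs_lt_of_sq_lt_sq h2s (le_of_lt hppos)
  have hbcad : b * c = a * d := by exact_mod_cast sub_eq_zero.mp hzero
  have gcd_one : ∀ x y : ℕ, 3 * x ^ 2 + y ^ 2 = p → Nat.Coprime x y := by
    intro x y hxy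
    have hgg : Nat.gcd x y * Nat.gcd x y ∣ p := by
      rw [← hxy, ← pow_two]
      exact dvd_add (Dvd.dvd.mul_left (pow_dvd_pow_of_dvd (Nat.gcd_dvd_left x y) 2) 3)
        (pow_dvd_pow_of_dvd (Nat.gcd_dvd_right x y) 2)
    rcases (Nat.Prime.eq_one_or_self_of_dvd hp _ hgg) with h | h
    · exact Nat.eq_one_of_mul_eq_one_right h
    · exact absurd h (not_square_of_prime hp hp3 _)
  have hcop : Nat.Coprime a b := gcd_one a b h1
  have hcop2 : Nat.Coprime c d := gcd_one c d h2
  have hac : a ∣ c := hcop.dvd_of_dvd_mul_left ⟨d, hbcad⟩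
  have hca : c ∣ a := hcop2.dvd_of_dvd_mul_left
    ⟨b, by rw [mul_comm d a, ← hbcad, mul_comm]⟩
  have haceq : a = c := Nat.dvd_antisymm hac hca
  refine ⟨haceq, ?_⟩
  have hbd : b ^ 2 = d ^ 2 := by rw [haceq] at h1; omega
  exact Nat.pow_left_injective (by norm_num) hbd

theorem unique_symmetric_triple (p : ℕ) (hp : p.Prime) (hp3 : 3 < p) (h : p % 3 = 1) :
    ∃! t : ℕ × ℕ × ℕ, 0 < t.1 ∧ 0 < t.2.1 ∧ 0 < t.2.2 ∧
      3 * t.1 ^ 2 + t.2.1 * t.2.2 = p ∧ t.2.1 = t.2.2 := by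
  obtain ⟨x, y, hx, hy, hxy⟩ := exists_rep hp hp3 h
  refine ⟨(x, y, y), ⟨hx, hy, hy, by rw [← pow_two]; exact hxy, rfl⟩, ?_⟩
  rintro ⟨u, v, w⟩ ⟨hu, hv, hw, heq, hvw⟩
  simp only at hu hv hw heq hvw
  subst hvw
  have heq' : 3 * u ^ 2 + v ^ 2 = p := by nlinarith [heq]
  obtain ⟨h1, h2⟩ := unique_rep hp hp3 hu hv hx hy heq' hxy
  simp [h1, h2]
end

section
/- Let p be a prime number with p > 3 and p ≡ 1 (mod 3). Then there exist positive integers x and z such that p = 3x² + 3x·z + z². -/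
/-- Since `p ≡ 1 [MOD 3]`, `-3` is a square modulo `p`. -/
private lemma aux_neg_three_is_sq (p : ℕ) (hp : p.Prime) (hp3 : 3 < p) (h : p % 3 = 1) :
    ∃ c : ZMod p, c ^ 2 = -3 := by
  haveI : Fact p.Prime := ⟨hp⟩
  have h3 : 3 ∣ p - 1 := by omega
  obtain ⟨g, hg⟩ := IsCyclic.exists_generator (α := (ZMod p)ˣ)
  have hcard : Fintype.card (ZMod p)ˣ = p - 1 := by
    rw [ZMod.card_units_eq_totient, Nat.totient_prime hp]
  have hog : orderOf g = p - 1 := by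
    rw [← hcard, ← Nat.card_eq_fintype_card]; exact orderOf_eq_card_of_forall_mem_zpowers hg
  set k := (p - 1) / 3 with hk
  have hω : orderOf (g ^ k) = 3 := by
    rw [orderOf_pow, hog, hk, Nat.gcd_eq_right (Nat.div_dvd_of_dvd h3),
      Nat.div_div_self h3 (by omega)]
  set w : ZMod p := ((g ^ k : (ZMod p)ˣ) : ZMod p) with hw
  have hw3 : w ^ 3 = 1 := by
    rw [hw, ← Units.val_pow_eq_pow_val, ← hω, pow_orderOf_eq_one, Units.val_one]
  have hw1 : w ≠ 1 := by
    intro hcon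
    have : (g ^ k : (ZMod p)ˣ) = 1 := Units.ext hcon
    have := orderOf_eq_one_iff.mpr this
    omega
  have hkey : w ^ 2 + w + 1 = 0 := by
    have : (w - 1) * (w ^ 2 + w + 1) = 0 := by ring_nf; linear_combination hw3
    rcases mul_eq_zero.mp this with h' | h'
    · exact absurd (sub_eq_zero.mp h') hw1
    · exact h'
  exact ⟨2 * w + 1, by linear_combination 4 * hkey⟩

/-- Thue's lemma style pigeonhole argument. -/
private lemma aux_thue (p : ℕ) (hp : p.Prime) (hp3 : 3 < p) (c : ZMod p) (hc : c ^ 2 = -3) :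
    ∃ a b : ℤ, (p : ℤ) ∣ a ^ 2 + 3 * b ^ 2 ∧ a ^ 2 < p ∧ b ^ 2 < p ∧ (a ≠ 0 ∨ b ≠ 0) := by
  haveI : Fact p.Prime := ⟨hp⟩
  set m := Nat.sqrt p with hm
  have hmp : m * m < p := by
    rcases Nat.lt_or_ge (m * m) p with h' | h'
    · exact h'
    · exfalso
      have h1 : m * m ≤ p := by simpa [pow_two] using Nat.sqrt_le' p
      have heq : m * m = p := le_antisymm h1 h'
      have hdvd : m ∣ p := ⟨m, heq.symm⟩
      rcases (Nat.Prime.eq_one_or_self_of_dvd hp m hdvd) with h1 | h1 <;>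
        rw [h1] at heq <;> nlinarith
  have hpm : p < (m + 1) * (m + 1) := by simpa [pow_two] using Nat.lt_succ_sqrt' p
  have hcard : (Finset.univ : Finset (ZMod p)).card <
      ((Finset.range (m+1)) ×ˢ (Finset.range (m+1))).card := by
    rw [Finset.card_univ, ZMod.card, Finset.card_product, Finset.card_range]
    omega
  obtain ⟨q1, hq1, q2, hq2, hne, heq⟩ :=
    Finset.exists_ne_map_eq_of_card_lt_of_maps_to hcard
      (f := fun q : ℕ × ℕ => (q.1 : ZMod p) - c * (q.2 : ZMod p))
      (fun q _ => Finset.mem_univ _)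
  simp only [Finset.mem_product, Finset.mem_range] at hq1 hq2
  refine ⟨(q1.1 : ℤ) - q2.1, (q1.2 : ℤ) - q2.2, ?_, ?_, ?_, ?_⟩
  · rw [← ZMod.intCast_zmod_eq_zero_iff_dvd]
    push_cast
    linear_combination (((q1.1 : ZMod p) - q2.1) + c * ((q1.2 : ZMod p) - q2.2)) * heq
      + (((q1.2 : ZMod p)) - q2.2) ^ 2 * hc
  · have h1 : (q1.1 : ℤ) < m + 1 := by exact_mod_cast hq1.1
    have h2 : (q2.1 : ℤ) < m + 1 := by exact_mod_cast hq2.1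
    have h0 : (0:ℤ) ≤ q1.1 := Int.natCast_nonneg _
    have h0' : (0:ℤ) ≤ q2.1 := Int.natCast_nonneg _
    have hmp' : (m:ℤ) * m < p := by exact_mod_cast hmp
    nlinarith
  · have h1 : (q1.2 : ℤ) < m + 1 := by exact_mod_cast hq1.2
    have h2 : (q2.2 : ℤ) < m + 1 := by exact_mod_cast hq2.2
    have h0 : (0:ℤ) ≤ q1.2 := Int.natCast_nonneg _
    have h0' : (0:ℤ) ≤ q2.2 := Int.natCast_nonneg _
    have hmp' : (m:ℤ) * m < p := by exact_mod_cast hmp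
    nlinarith
  · by_contra hcon
    push_neg at hcon
    obtain ⟨h1, h2⟩ := hcon
    apply hne
    exact Prod.ext (by omega) (by omega)

/-- Descent: `p = u² + 3v²`. -/
private lemma aux_sq_add_three_sq (p : ℕ) (hp : p.Prime) (hp3 : 3 < p)
    (a b : ℤ) (hdvd : (p : ℤ) ∣ a ^ 2 + 3 * b ^ 2) (ha : a ^ 2 < p) (hb : b ^ 2 < p)
    (hne : a ≠ 0 ∨ b ≠ 0) : ∃ u v : ℤ, (p : ℤ) = u ^ 2 + 3 * v ^ 2 := by
  obtain ⟨k, hk⟩ := hdvd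
  have hpos : 0 < a ^ 2 + 3 * b ^ 2 := by
    rcases hne with h | h
    · have : 0 < a ^ 2 := by positivity
      nlinarith [sq_nonneg b]
    · have : 0 < b ^ 2 := by positivity
      nlinarith [sq_nonneg a]
  have hppos : (0:ℤ) < p := by exact_mod_cast hp.pos
  have hk0 : 0 < k := by nlinarith
  have hk4 : k < 4 := by nlinarith
  interval_cases k
  · exact ⟨a, b, by linarith⟩
  · exfalso
    have hodd : p % 2 = 1 := Nat.odd_iff.mp (hp.odd_of_ne_two (by omega))
    have hp4 : (p : ZMod 4) = 1 ∨ (p : ZMod 4) = 3 := by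
      have h4 : p % 4 = 1 ∨ p % 4 = 3 := by omega
      have : ((p % 4 : ℕ) : ZMod 4) = (p : ZMod 4) := ZMod.natCast_mod p 4
      rcases h4 with h' | h' <;> rw [← this, h']
      · left; rfl
      · right; rfl
    have key : ∀ x y q : ZMod 4, q = 1 ∨ q = 3 → x ^ 2 + 3 * y ^ 2 ≠ q * 2 := by decide
    have hcast : ((a : ZMod 4)) ^ 2 + 3 * (b : ZMod 4) ^ 2 = (p : ZMod 4) * 2 := by
      have := congrArg (fun z : ℤ => (z : ZMod 4)) hk
      push_cast at this
      linear_combination this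
    exact key _ _ _ hp4 hcast
  · have h3a : (3:ℤ) ∣ a := by
      have : (3:ℤ) ∣ a ^ 2 := ⟨p - b ^ 2, by linarith⟩
      exact Int.Prime.dvd_pow' (by norm_num) this
    obtain ⟨a1, rfl⟩ := h3a
    exact ⟨b, a1, by nlinarith⟩

/-- Converting `p = u² + 3v²` into the form `3x² + 3xz + z²`. -/
private lemma aux_final_step (p : ℕ) (hp : p.Prime) (hp3 : 3 < p) (h : p % 3 = 1)
    (U V : ℕ) (hrep : (p:ℤ) = (U:ℤ) ^ 2 + 3 * (V:ℤ) ^ 2) :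
    ∃ x z : ℕ, 0 < x ∧ 0 < z ∧ p = 3 * x ^ 2 + 3 * x * z + z ^ 2 := by
  have hodd : p % 2 = 1 := Nat.odd_iff.mp (hp.odd_of_ne_two (by omega))
  have hrepn : p = U ^ 2 + 3 * V ^ 2 := by exact_mod_cast hrep
  have hU0 : 0 < U := by
    rcases Nat.eq_zero_or_pos U with h' | h'
    · exfalso; subst h'; simp at hrepn; omega
    · exact h'
  have hV0 : 0 < V := by
    rcases Nat.eq_zero_or_pos V with h' | h'
    · exfalso
      subst h'
      simp at hrepn
      have hdvd : U ∣ p := ⟨U, by nlinarith⟩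
      rcases hp.eq_one_or_self_of_dvd U hdvd with h1 | h1 <;> nlinarith
    · exact h'
  rcases Nat.lt_trichotomy U V with hUV | hUV | hUV
  · refine ⟨V - U, 2 * U, by omega, by omega, ?_⟩
    have hb : V = U + (V - U) := by omega
    zify
    set b : ℕ := V - U with hbdef
    have hb' : (V:ℤ) = U + b := by exact_mod_cast hb
    rw [hrep, hb']; ring
  · exfalso; subst hUV; omega
  · have ha : U = V + (U - V) := by omega
    set a : ℕ := U - V with hadef
    have ha' : (U:ℤ) = V + a := by exact_mod_cast ha
    rcases Nat.lt_trichotomy a (2 * V) with h2 | h2 | h2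
    · refine ⟨a, 2 * V - a, by omega, by omega, ?_⟩
      zify
      have hz : ((2 * V - a : ℕ) : ℤ) = 2 * V - a := by
        push_cast [Nat.cast_sub (le_of_lt h2)]; ring
      rw [hz, hrep, ha']; ring
    · exfalso
      have : p = 12 * V ^ 2 := by
        have ha2 : (a:ℤ) = 2 * V := by exact_mod_cast h2
        have : (p:ℤ) = 12 * (V:ℤ)^2 := by rw [hrep, ha', ha2]; ring
        exact_mod_cast this
      omega
    · refine ⟨2 * V, a - 2 * V, by omega, by omega, ?_⟩
      zify
      have hz : ((a - 2 * V : ℕ) : ℤ) = a - 2 * V := by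
        push_cast [Nat.cast_sub (le_of_lt h2)]; ring
      rw [hz, hrep, ha']; ring

theorem exists_rep_three_x_sq (p : ℕ) (hp : p.Prime) (hp3 : 3 < p) (h : p % 3 = 1) :
    ∃ x z : ℕ, 0 < x ∧ 0 < z ∧ p = 3 * x ^ 2 + 3 * x * z + z ^ 2 := by
  obtain ⟨c, hc⟩ := aux_neg_three_is_sq p hp hp3 h
  obtain ⟨a, b, hdvd, ha, hb, hne⟩ := aux_thue p hp hp3 c hc
  obtain ⟨u, v, huv⟩ := aux_sq_add_three_sq p hp hp3 a b hdvd ha hb hne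
  have huv' : (p:ℤ) = (u.natAbs : ℤ) ^ 2 + 3 * (v.natAbs : ℤ) ^ 2 := by
    rw [huv, Int.natAbs_sq u, Int.natAbs_sq v]
  exact aux_final_step p hp hp3 h u.natAbs v.natAbs huv'
end

section
/- Let p be a prime number and let x, z be positive integers with p = 3x² + 2x·z. Then x = 1 and z = (p − 3)/2 (equivalently, 2z = p − 3). -/
theorem fixed_point_S8 (p : ℕ) (hp : p.Prime) (x z : ℕ) (hx : 0 < x) (hz : 0 < z)
    (h : p = 3 * x ^ 2 + 2 * x * z) : x = 1 ∧ 2 * z = p - 3 := by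
  have hd : x ∣ p := ⟨3 * x + 2 * z, by rw [h]; ring⟩
  rcases (Nat.Prime.eq_one_or_self_of_dvd hp x hd) with h1 | h1
  · subst h1
    constructor
    · rfl
    · omega
  · exfalso
    have hp2 := hp.two_le
    nlinarith [hp.two_le]
end
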